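/- Assume r satisfies gcd(r, det P) = 1 and ξ ∈ ℂ is a primitive r-th root of unity. For λ, μ ∈ ρ + ℤ^ℓ set S(λ,μ) := ∑_{w ∈ W} det(w)·ξ^{B(μ, w·λ) − B(ρ,ρ)}. Let Λ ⊆ ρ + ℤ^ℓ be a finite set such that for all λ, ν ∈ Λ and all w, w' ∈ W, the condition w·λ − w'·ν ∈ rℤ^ℓ implies λ = ν and w = w'. Then for λ ≠ ν in Λ one has ∑_{k ∈ {0,…,r−1}^ℓ} S(λ, ρ+k)·\overline{S(ν, ρ+k)} = 0, while ∑_{k ∈ {0,…,r−1}^ℓ} |S(λ, ρ+k)|² = |W|·r^ℓ for each λ ∈ Λ; consequently the vectors (S(λ, ρ+k))_{k ∈ {0,…,r−1}^ℓ}, indexed by λ ∈ Λ, are pairwise orthogonal, nonzero, and linearly independent over ℂ. -/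

import Mathlib

/-- Cast an integer vector to a rational vector. -/
def intVecQ {l : ℕ} (x : Fin l → ℤ) : Fin l → ℚ := fun i => (x i : ℚ)

/-- Cast a vector of residues `k ∈ {0,…,r−1}^l` to a rational vector. -/
def finVecQ {l r : ℕ} (k : Fin l → Fin r) : Fin l → ℚ := fun i => ((k i : ℕ) : ℚ)

/-- The determinant of an element of `GL_l(ℤ)`. -/
def glDet {l : ℕ} (w : Matrix.GeneralLinearGroup (Fin l) ℤ) : ℤ :=
  Matrix.det (w : Matrix (Fin l) (Fin l) ℤ)

/-- The action of an element of `GL_l(ℤ)` on `ℚ^l`. -/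
def glAct {l : ℕ} (w : Matrix.GeneralLinearGroup (Fin l) ℤ) (x : Fin l → ℚ) : Fin l → ℚ :=
  Matrix.mulVec ((w : Matrix (Fin l) (Fin l) ℤ).map fun z => (z : ℚ)) x

-- helper: geometric sum
lemma geomAux {r : ℕ} (hr : 0 < r) {ξ : ℂ} (hξ : IsPrimitiveRoot ξ r) (c : ℤ) :
    ∑ j : Fin r, ξ ^ ((j : ℤ) * c) = if (r : ℤ) ∣ c then (r : ℂ) else 0 := by
  have hξne : ξ ≠ 0 := by
    intro h
    have := hξ.pow_eq_one
    rw [h, zero_pow hr.ne'] at this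
    exact zero_ne_one this
  have hζr : (ξ ^ c) ^ r = 1 := by
    rw [← zpow_natCast (ξ ^ c), ← zpow_mul, mul_comm, zpow_mul, zpow_natCast, hξ.pow_eq_one,
      one_zpow]
  have hrw : ∀ j : Fin r, ξ ^ ((j : ℤ) * c) = (ξ ^ c) ^ (j : ℕ) := by
    intro j
    rw [mul_comm, zpow_mul, zpow_natCast]
  rw [Finset.sum_congr rfl fun j _ => hrw j]
  rw [Fin.sum_univ_eq_sum_range (fun n => (ξ ^ c) ^ n)]
  by_cases h : (r : ℤ) ∣ c
  · have : ξ ^ c = 1 := (hξ.zpow_eq_one_iff_dvd c).mpr h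
    simp [this, h]
  · have hne1 : ξ ^ c ≠ 1 := fun hc => h ((hξ.zpow_eq_one_iff_dvd c).mp hc)
    rw [geom_sum_eq hne1, if_neg h, hζr, sub_self, zero_div]

lemma zpowSum {α : Type*} {ξ : ℂ} (hξne : ξ ≠ 0) (s : Finset α) (f : α → ℤ) :
    ξ ^ (∑ i ∈ s, f i) = ∏ i ∈ s, ξ ^ f i := by
  induction s using Finset.cons_induction with
  | empty => simp
  | cons a s ha ih => rw [Finset.sum_cons, Finset.prod_cons, zpow_add₀ hξne, ih]

lemma sumProd {l r : ℕ} (hr : 0 < r) {ξ : ℂ} (hξ : IsPrimitiveRoot ξ r)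
    (m : ℤ) (c : Fin l → ℤ) :
    ∑ k : Fin l → Fin r, ξ ^ (m + ∑ i, ((k i : ℤ) * c i)) =
      ξ ^ m * ∏ i, (if (r : ℤ) ∣ c i then (r : ℂ) else 0) := by
  have hξne : ξ ≠ 0 := by
    intro h
    have := hξ.pow_eq_one
    rw [h, zero_pow hr.ne'] at this
    exact zero_ne_one this
  have : ∀ k : Fin l → Fin r, ξ ^ (m + ∑ i, ((k i : ℤ) * c i)) =
      ξ ^ m * ∏ i, ξ ^ ((k i : ℤ) * c i) := by
    intro k
    rw [zpow_add₀ hξne, zpowSum hξne]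
  rw [Finset.sum_congr rfl fun k _ => this k, ← Finset.mul_sum,
    ← Fintype.prod_sum (fun (i : Fin l) (j : Fin r) => ξ ^ ((j : ℤ) * c i))]
  congr 1
  exact Finset.prod_congr rfl fun i _ => geomAux hr hξ (c i)



lemma singleEq {l : ℕ} (i : Fin l) :
    (fun j => if i = j then (1 : ℚ) else 0) = Pi.single i (1 : ℚ) := by
  funext j
  rw [Pi.single_apply]
  by_cases h : i = j <;> simp [h, eq_comm]

lemma vecDecomp {l : ℕ} (x : Fin l → ℚ) :
    x = ∑ i, x i • (Pi.single i (1 : ℚ) : Fin l → ℚ) := by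
  conv_lhs => rw [pi_eq_sum_univ x]
  exact Finset.sum_congr rfl fun i _ => by rw [singleEq]

lemma Bright {l : ℕ} (B : (Fin l → ℚ) →ₗ[ℚ] (Fin l → ℚ) →ₗ[ℚ] ℚ) (y : Fin l → ℚ)
    (d : Fin l → ℚ) : B y d = ∑ j, d j * B y (Pi.single j 1) := by
  conv_lhs => rw [vecDecomp d, map_sum]
  exact Finset.sum_congr rfl fun j _ => by rw [map_smul, smul_eq_mul]

lemma Bleft {l : ℕ} (B : (Fin l → ℚ) →ₗ[ℚ] (Fin l → ℚ) →ₗ[ℚ] ℚ) (x : Fin l → ℚ)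
    (v : Fin l → ℚ) : B x v = ∑ i, x i * B (Pi.single i 1) v := by
  conv_lhs => rw [vecDecomp x, map_sum]
  rw [LinearMap.sum_apply]
  exact Finset.sum_congr rfl fun i _ => by rw [map_smul, LinearMap.smul_apply, smul_eq_mul]

lemma castMulVec {l : ℕ} (M : Matrix (Fin l) (Fin l) ℤ) (v : Fin l → ℤ) :
    (M.map fun z => (z : ℚ)).mulVec (intVecQ v) = intVecQ (M.mulVec v) := by
  funext i
  simp [Matrix.mulVec, dotProduct, intVecQ, Matrix.map]

lemma intSingle {l : ℕ} (i : Fin l) :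
    intVecQ (Pi.single i (1 : ℤ)) = Pi.single i (1 : ℚ) := by
  funext j
  simp [intVecQ, Pi.single_apply, apply_ite (fun z : ℤ => (z : ℚ))]

lemma intVecQ_add {l : ℕ} (x y : Fin l → ℤ) :
    intVecQ (x + y) = intVecQ x + intVecQ y := by
  funext i; simp [intVecQ]

lemma intVecQ_sub {l : ℕ} (x y : Fin l → ℤ) :
    intVecQ (x - y) = intVecQ x - intVecQ y := by
  funext i; simp [intVecQ]

lemma conjZpow {r : ℕ} (hr : 0 < r) {ξ : ℂ} (hξ : IsPrimitiveRoot ξ r) (n : ℤ) :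
    (starRingEnd ℂ) (ξ ^ n) = ξ ^ (-n) := by
  have hnorm : ‖ξ‖ = 1 := Complex.norm_eq_one_of_pow_eq_one hξ.pow_eq_one hr.ne'
  rw [map_zpow₀, ← Complex.inv_eq_conj hnorm, inv_zpow, ← zpow_neg]

/-- if `Λ ⊆ ρ + ℤ^ℓ` is a set on which the `W_r`-orbits are separated
(`w·λ − w'·ν ∈ rℤ^ℓ` forces `λ = ν`, `w = w'`), then the rows
`(S(λ, ρ+k))_k` of the `S`-matrix, `λ ∈ Λ`, are pairwise orthogonal, have squared norm
`|W|·r^ℓ`, are nonzero, and are linearly independent over `ℂ`. -/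
theorem stmt11 (l r : ℕ) (hl : 0 < l) (hr : 0 < r)
    (B : (Fin l → ℚ) →ₗ[ℚ] (Fin l → ℚ) →ₗ[ℚ] ℚ)
    (hBsymm : ∀ x y, B x y = B y x)
    (hBint : ∀ x y : Fin l → ℤ, ∃ n : ℤ, (n : ℚ) = B (intVecQ x) (intVecQ y))
    (hBeven : ∀ y : Fin l → ℤ, ∃ n : ℤ, ((2 * n : ℤ) : ℚ) = B (intVecQ y) (intVecQ y))
    (ρ : Fin l → ℚ)
    (hρ : ∀ y : Fin l → ℤ, ∃ n : ℤ, (n : ℚ) = B ρ (intVecQ y))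
    (dP : ℤ)
    (hdP : (dP : ℚ) = (Matrix.of fun i j : Fin l => B (Pi.single i 1) (Pi.single j 1)).det)
    (hdPne : dP ≠ 0) (hcop : IsCoprime (r : ℤ) dP)
    (ξ : ℂ) (hξ : IsPrimitiveRoot ξ r)
    (W : Subgroup (Matrix.GeneralLinearGroup (Fin l) ℤ)) [Fintype W]
    (hWB : ∀ (w : W) (x y : Fin l → ℚ),
      B (glAct (w : Matrix.GeneralLinearGroup (Fin l) ℤ) x)
        (glAct (w : Matrix.GeneralLinearGroup (Fin l) ℤ) y) = B x y)
    (hWρ : ∀ w : W, ∃ z : Fin l → ℤ,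
      glAct (w : Matrix.GeneralLinearGroup (Fin l) ℤ) ρ - ρ = intVecQ z)
    (Λ : Finset (Fin l → ℚ))
    (hΛ : ∀ μ ∈ Λ, ∃ a : Fin l → ℤ, μ = ρ + intVecQ a)
    (hsep : ∀ lam ∈ Λ, ∀ nu ∈ Λ, ∀ w w' : W,
      (∃ z : Fin l → ℤ,
          glAct (w : Matrix.GeneralLinearGroup (Fin l) ℤ) lam -
              glAct (w' : Matrix.GeneralLinearGroup (Fin l) ℤ) nu =
            fun i => ((r * z i : ℤ) : ℚ)) →
        lam = nu ∧ w = w')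
    (E : (Fin l → ℚ) → W → (Fin l → Fin r) → ℤ)
    (hE : ∀ μ ∈ Λ, ∀ (w : W) (k : Fin l → Fin r),
      ((E μ w k : ℤ) : ℚ) =
        B (ρ + finVecQ k) (glAct (w : Matrix.GeneralLinearGroup (Fin l) ℤ) μ) - B ρ ρ) :
    (∀ lam ∈ Λ, ∀ nu ∈ Λ, lam ≠ nu →
      ∑ k : Fin l → Fin r,
          (∑ w : W, ((glDet (w : Matrix.GeneralLinearGroup (Fin l) ℤ) : ℤ) : ℂ) *
              ξ ^ (E lam w k)) *
            (starRingEnd ℂ)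
              (∑ w : W, ((glDet (w : Matrix.GeneralLinearGroup (Fin l) ℤ) : ℤ) : ℂ) *
                ξ ^ (E nu w k)) = 0) ∧
    (∀ lam ∈ Λ,
      ∑ k : Fin l → Fin r,
          (∑ w : W, ((glDet (w : Matrix.GeneralLinearGroup (Fin l) ℤ) : ℤ) : ℂ) *
              ξ ^ (E lam w k)) *
            (starRingEnd ℂ)
              (∑ w : W, ((glDet (w : Matrix.GeneralLinearGroup (Fin l) ℤ) : ℤ) : ℂ) *
                ξ ^ (E lam w k)) = (Fintype.card W : ℂ) * (r : ℂ) ^ l) ∧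
    (∀ lam ∈ Λ,
      (fun k : Fin l → Fin r =>
        ∑ w : W, ((glDet (w : Matrix.GeneralLinearGroup (Fin l) ℤ) : ℤ) : ℂ) *
          ξ ^ (E lam w k)) ≠ 0) ∧
    LinearIndependent ℂ
      (fun lam : {x // x ∈ Λ} => fun k : Fin l → Fin r =>
        ∑ w : W, ((glDet (w : Matrix.GeneralLinearGroup (Fin l) ℤ) : ℤ) : ℂ) *
          ξ ^ (E (lam : Fin l → ℚ) w k)) := by
  classical
  have hξne : ξ ≠ 0 := by
    intro h
    have h2 := hξ.pow_eq_one
    rw [h, zero_pow hr.ne'] at h2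
    exact zero_ne_one h2
  -- integer Gram matrix
  have hP : ∀ i j : Fin l, ∃ n : ℤ, (n : ℚ) = B (Pi.single i 1) (Pi.single j 1) := by
    intro i j
    simpa [intSingle] using hBint (Pi.single i 1) (Pi.single j 1)
  choose Pm hPm using hP
  have hdet : (Matrix.of Pm).det = dP := by
    have h1 : (Matrix.of Pm).map (fun z : ℤ => (z : ℚ)) =
        Matrix.of fun i j : Fin l => B (Pi.single i 1) (Pi.single j 1) := by
      ext i j
      exact hPm i j
    have h2 : (((Matrix.of Pm).det : ℤ) : ℚ) = (dP : ℚ) := by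
      have e : (((Matrix.of Pm).det : ℤ) : ℚ) = ((Matrix.of Pm).map (fun z : ℤ => (z : ℚ))).det :=
        RingHom.map_det (Int.castRingHom ℚ) (Matrix.of Pm)
      rw [e, h1, hdP]
    exact_mod_cast h2
  -- difference vectors
  have hdiff : ∀ lam ∈ Λ, ∀ nu ∈ Λ, ∀ w w' : W, ∃ d : Fin l → ℤ,
      intVecQ d = glAct (w : Matrix.GeneralLinearGroup (Fin l) ℤ) lam -
        glAct (w' : Matrix.GeneralLinearGroup (Fin l) ℤ) nu := by
    intro lam hlam nu hnu w w'
    obtain ⟨aL, haL⟩ := hΛ lam hlam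
    obtain ⟨aN, haN⟩ := hΛ nu hnu
    obtain ⟨zw, hzw⟩ := hWρ w
    obtain ⟨zw', hzw'⟩ := hWρ w'
    refine ⟨(zw + ((w : Matrix.GeneralLinearGroup (Fin l) ℤ) : Matrix (Fin l) (Fin l) ℤ).mulVec aL)
      - (zw' + ((w' : Matrix.GeneralLinearGroup (Fin l) ℤ) : Matrix (Fin l) (Fin l) ℤ).mulVec aN), ?_⟩
    rw [intVecQ_sub, intVecQ_add, intVecQ_add, haL, haN]
    have e1 : ∀ (u : Matrix.GeneralLinearGroup (Fin l) ℤ) (x y : Fin l → ℚ),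
        glAct u (x + y) = glAct u x + glAct u y := fun u x y => Matrix.mulVec_add _ _ _
    rw [e1, e1, ← castMulVec, ← castMulVec]
    have e2 : glAct (↑w) ρ = ρ + intVecQ zw := by
      have := hzw
      linear_combination (norm := abel) this
    have e3 : glAct (↑w') ρ = ρ + intVecQ zw' := by
      linear_combination (norm := abel) hzw'
    rw [e2, e3]
    show intVecQ zw + glAct (↑w) (intVecQ aL) - (intVecQ zw' + glAct (↑w') (intVecQ aN)) = _
    abel
  -- the key inner sum
  have Tval : ∀ lam ∈ Λ, ∀ nu ∈ Λ, ∀ w w' : W,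
      ∑ k : Fin l → Fin r, ξ ^ (E lam w k - E nu w' k) =
        if lam = nu ∧ w = w' then ((r : ℂ)) ^ l else 0 := by
    intro lam hlam nu hnu w w'
    obtain ⟨d, hd⟩ := hdiff lam hlam nu hnu w w'
    have hc : ∀ i : Fin l, ∃ n : ℤ, (n : ℚ) = B (Pi.single i 1) (intVecQ d) := by
      intro i
      simpa [intSingle] using hBint (Pi.single i 1) d
    choose c hcv using hc
    obtain ⟨m, hm⟩ := hρ d
    have hExp : ∀ k : Fin l → Fin r,
        E lam w k - E nu w' k = m + ∑ i, ((k i : ℤ) * c i) := by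
      intro k
      have hq : ((E lam w k - E nu w' k : ℤ) : ℚ) = ((m + ∑ i, ((k i : ℤ) * c i) : ℤ) : ℚ) := by
        push_cast
        rw [hE lam hlam w k, hE nu hnu w' k]
        have e : B (ρ + finVecQ k) (glAct (↑w) lam) - B (ρ + finVecQ k) (glAct (↑w') nu) =
            B (ρ + finVecQ k) (intVecQ d) := by
          rw [← map_sub (B (ρ + finVecQ k)), ← hd]
        have e2 : B (ρ + finVecQ k) (intVecQ d) =
            B ρ (intVecQ d) + B (finVecQ k) (intVecQ d) := by
          rw [map_add, LinearMap.add_apply]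
        have e3 : B (finVecQ k) (intVecQ d) = ∑ i, ((k i : ℕ) : ℚ) * (c i : ℚ) := by
          rw [Bleft]
          exact Finset.sum_congr rfl fun i _ => by rw [hcv i]; rfl
        have e4 : ∑ i, ((k i : ℤ) : ℚ) * ((c i : ℤ) : ℚ) = ∑ i, ((k i : ℕ) : ℚ) * (c i : ℚ) := by
          push_cast
          rfl
        calc B (ρ + finVecQ k) (glAct (↑w) lam) - B ρ ρ -
              (B (ρ + finVecQ k) (glAct (↑w') nu) - B ρ ρ)
            = B (ρ + finVecQ k) (glAct (↑w) lam) - B (ρ + finVecQ k) (glAct (↑w') nu) := by ring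
          _ = B ρ (intVecQ d) + B (finVecQ k) (intVecQ d) := by rw [e, e2]
          _ = (m : ℚ) + ∑ i, ((k i : ℤ) : ℚ) * ((c i : ℤ) : ℚ) := by rw [← hm, e3, e4]
      exact_mod_cast hq
    by_cases hdvd : ∀ i, (r : ℤ) ∣ c i
    · -- all divisible: forces lam = nu, w = w'
      have hDd : ∀ i, (r : ℤ) ∣ d i := by
        intro i
        have hcd : c = (Matrix.of Pm).mulVec d := by
          funext j
          have hq : ((c j : ℤ) : ℚ) = (((Matrix.of Pm).mulVec d j : ℤ) : ℚ) := by
            rw [hcv j, Bright]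
            show _ = ((∑ j', Matrix.of Pm j j' * d j' : ℤ) : ℚ)
            push_cast
            refine Finset.sum_congr rfl fun j' _ => ?_
            rw [Matrix.of_apply, ← hPm j j']
            show (d j' : ℚ) * _ = _
            push_cast
            ring
          exact_mod_cast hq
        have hadj : (Matrix.of Pm).adjugate.mulVec c = dP • d := by
          rw [hcd, Matrix.mulVec_mulVec, Matrix.adjugate_mul, hdet,
            Matrix.smul_mulVec, Matrix.one_mulVec]
        have h1 : (r : ℤ) ∣ ((Matrix.of Pm).adjugate.mulVec c) i := by
          show (r : ℤ) ∣ ∑ j, (Matrix.of Pm).adjugate i j * c j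
          exact Finset.dvd_sum fun j _ => Dvd.dvd.mul_left (hdvd j) _
        rw [hadj] at h1
        exact hcop.dvd_of_dvd_mul_left (by simpa using h1)
      choose t ht using hDd
      obtain ⟨hln, hww⟩ := hsep lam hlam nu hnu w w' ⟨t, by
        rw [← hd]
        funext i
        show (d i : ℚ) = ((r * t i : ℤ) : ℚ)
        exact_mod_cast congrArg (fun z : ℤ => (z : ℚ)) (ht i)⟩
      subst hln
      subst hww
      rw [if_pos ⟨rfl, rfl⟩]
      have : ∀ k : Fin l → Fin r, ξ ^ (E lam w k - E lam w k) = 1 := by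
        intro k
        rw [sub_self, zpow_zero]
      rw [Finset.sum_congr rfl fun k _ => this k, Finset.sum_const, Finset.card_univ,
        Fintype.card_fun, Fintype.card_fin, Fintype.card_fin, nsmul_eq_mul]
      push_cast
      ring
    · -- some factor vanishes
      push_neg at hdvd
      obtain ⟨i0, hi0⟩ := hdvd
      have hne : ¬(lam = nu ∧ w = w') := by
        rintro ⟨hln, hww⟩
        subst hln
        subst hww
        have hd0 : d = 0 := by
          funext i
          have : (d i : ℚ) = 0 := by
            have := congrFun hd i
            rw [sub_self] at this
            exact this
          exact_mod_cast this
        apply hi0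
        have : (c i0 : ℚ) = 0 := by
          rw [hcv i0, hd0]
          show B _ (intVecQ 0) = 0
          have : intVecQ (0 : Fin l → ℤ) = 0 := by funext i; simp [intVecQ]
          rw [this, map_zero]
        have hc0 : c i0 = 0 := by exact_mod_cast this
        rw [hc0]
        exact dvd_zero _
      rw [if_neg hne]
      rw [Finset.sum_congr rfl fun k _ => congrArg (ξ ^ ·) (hExp k)]
      rw [sumProd hr hξ m c]
      have hz : (if (r : ℤ) ∣ c i0 then (r : ℂ) else 0) = 0 := if_neg hi0
      rw [Finset.prod_eq_zero (Finset.mem_univ i0) hz, mul_zero]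
  -- determinant units
  have hunit : ∀ w : W, ((glDet (w : Matrix.GeneralLinearGroup (Fin l) ℤ) : ℤ) : ℂ) *
      ((glDet (w : Matrix.GeneralLinearGroup (Fin l) ℤ) : ℤ) : ℂ) = 1 := by
    intro w
    have h1 : ((w : Matrix.GeneralLinearGroup (Fin l) ℤ) : Matrix (Fin l) (Fin l) ℤ) *
        (((w : Matrix.GeneralLinearGroup (Fin l) ℤ)⁻¹ :
          Matrix.GeneralLinearGroup (Fin l) ℤ) : Matrix (Fin l) (Fin l) ℤ) = 1 :=
      Units.mul_inv _
    have hu : IsUnit (glDet (w : Matrix.GeneralLinearGroup (Fin l) ℤ)) := by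
      refine IsUnit.of_mul_eq_one
        (Matrix.det (((w : Matrix.GeneralLinearGroup (Fin l) ℤ)⁻¹ :
          Matrix.GeneralLinearGroup (Fin l) ℤ) : Matrix (Fin l) (Fin l) ℤ)) ?_
      rw [glDet, ← Matrix.det_mul, h1, Matrix.det_one]
    rcases Int.isUnit_iff.mp hu with h | h <;> rw [h] <;> norm_num
  -- main orthogonality computation
  have main : ∀ lam ∈ Λ, ∀ nu ∈ Λ,
      ∑ k : Fin l → Fin r,
          (∑ w : W, ((glDet (w : Matrix.GeneralLinearGroup (Fin l) ℤ) : ℤ) : ℂ) *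
              ξ ^ (E lam w k)) *
            (starRingEnd ℂ)
              (∑ w : W, ((glDet (w : Matrix.GeneralLinearGroup (Fin l) ℤ) : ℤ) : ℂ) *
                ξ ^ (E nu w k)) =
        if lam = nu then (Fintype.card W : ℂ) * (r : ℂ) ^ l else 0 := by
    intro lam hlam nu hnu
    have step1 : ∀ k : Fin l → Fin r,
        (∑ w : W, ((glDet (w : Matrix.GeneralLinearGroup (Fin l) ℤ) : ℤ) : ℂ) *
            ξ ^ (E lam w k)) *
          (starRingEnd ℂ)
            (∑ w : W, ((glDet (w : Matrix.GeneralLinearGroup (Fin l) ℤ) : ℤ) : ℂ) *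
              ξ ^ (E nu w k)) =
        ∑ w : W, ∑ w' : W,
          ((glDet (w : Matrix.GeneralLinearGroup (Fin l) ℤ) : ℤ) : ℂ) *
            ((glDet (w' : Matrix.GeneralLinearGroup (Fin l) ℤ) : ℤ) : ℂ) *
            ξ ^ (E lam w k - E nu w' k) := by
      intro k
      rw [map_sum, Finset.sum_mul_sum]
      refine Finset.sum_congr rfl fun w _ => Finset.sum_congr rfl fun w' _ => ?_
      rw [map_mul, conjZpow hr hξ, map_intCast, sub_eq_add_neg, zpow_add₀ hξne]
      ring
    rw [Finset.sum_congr rfl fun k _ => step1 k]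
    rw [Finset.sum_comm]
    have step2 : ∀ w : W, ∑ k : Fin l → Fin r, ∑ w' : W,
        ((glDet (w : Matrix.GeneralLinearGroup (Fin l) ℤ) : ℤ) : ℂ) *
          ((glDet (w' : Matrix.GeneralLinearGroup (Fin l) ℤ) : ℤ) : ℂ) *
          ξ ^ (E lam w k - E nu w' k) =
        ∑ w' : W, ((glDet (w : Matrix.GeneralLinearGroup (Fin l) ℤ) : ℤ) : ℂ) *
          ((glDet (w' : Matrix.GeneralLinearGroup (Fin l) ℤ) : ℤ) : ℂ) *
          (if lam = nu ∧ w = w' then ((r : ℂ)) ^ l else 0) := by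
      intro w
      rw [Finset.sum_comm]
      refine Finset.sum_congr rfl fun w' _ => ?_
      rw [← Finset.mul_sum, Tval lam hlam nu hnu w w']
    rw [Finset.sum_congr rfl fun w _ => step2 w]
    by_cases hln : lam = nu
    · subst hln
      rw [if_pos rfl]
      have step3 : ∀ w : W, ∑ w' : W,
          ((glDet (w : Matrix.GeneralLinearGroup (Fin l) ℤ) : ℤ) : ℂ) *
            ((glDet (w' : Matrix.GeneralLinearGroup (Fin l) ℤ) : ℤ) : ℂ) *
            (if lam = lam ∧ w = w' then ((r : ℂ)) ^ l else 0) = ((r : ℂ)) ^ l := by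
        intro w
        rw [Finset.sum_eq_single w]
        · rw [if_pos ⟨rfl, rfl⟩, hunit w, one_mul]
        · intro w' _ hne
          rw [if_neg (fun h => hne h.2.symm), mul_zero]
        · intro h
          exact absurd (Finset.mem_univ w) h
      rw [Finset.sum_congr rfl fun w _ => step3 w, Finset.sum_const, Finset.card_univ,
        nsmul_eq_mul]
    · rw [if_neg hln]
      refine Finset.sum_eq_zero fun w _ => Finset.sum_eq_zero fun w' _ => ?_
      rw [if_neg (fun h => hln h.1), mul_zero]
  -- assemble the four statements
  refine ⟨?_, ?_, ?_, ?_⟩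
  · intro lam hlam nu hnu hne
    rw [main lam hlam nu hnu, if_neg hne]
  · intro lam hlam
    rw [main lam hlam lam hlam, if_pos rfl]
  · intro lam hlam h0
    have h2 := main lam hlam lam hlam
    rw [if_pos rfl] at h2
    have h3 : ∀ k : Fin l → Fin r,
        (∑ w : W, ((glDet (w : Matrix.GeneralLinearGroup (Fin l) ℤ) : ℤ) : ℂ) *
          ξ ^ (E lam w k)) = 0 := fun k => congrFun h0 k
    rw [Finset.sum_congr rfl fun k _ => by rw [h3 k, zero_mul]] at h2
    rw [Finset.sum_const_zero] at h2
    have hcard : (Fintype.card W : ℂ) ≠ 0 := by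
      exact_mod_cast Fintype.card_ne_zero
    have hrl : ((r : ℂ)) ^ l ≠ 0 := pow_ne_zero _ (by exact_mod_cast hr.ne')
    exact (mul_ne_zero hcard hrl) h2.symm
  · rw [Fintype.linearIndependent_iff]
    intro g hg μ
    have h0 : ∑ k : Fin l → Fin r,
        ((∑ i : {x // x ∈ Λ}, g i • fun k : Fin l → Fin r =>
          ∑ w : W, ((glDet (w : Matrix.GeneralLinearGroup (Fin l) ℤ) : ℤ) : ℂ) *
            ξ ^ (E (i : Fin l → ℚ) w k)) k) *
          (starRingEnd ℂ) (∑ w : W,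
            ((glDet (w : Matrix.GeneralLinearGroup (Fin l) ℤ) : ℤ) : ℂ) *
              ξ ^ (E (μ : Fin l → ℚ) w k)) = 0 := by
      rw [hg]
      simp
    have h1 : ∀ k : Fin l → Fin r,
        ((∑ i : {x // x ∈ Λ}, g i • fun k : Fin l → Fin r =>
          ∑ w : W, ((glDet (w : Matrix.GeneralLinearGroup (Fin l) ℤ) : ℤ) : ℂ) *
            ξ ^ (E (i : Fin l → ℚ) w k)) k) *
          (starRingEnd ℂ) (∑ w : W,
            ((glDet (w : Matrix.GeneralLinearGroup (Fin l) ℤ) : ℤ) : ℂ) *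
              ξ ^ (E (μ : Fin l → ℚ) w k)) =
        ∑ i : {x // x ∈ Λ}, g i *
          ((∑ w : W, ((glDet (w : Matrix.GeneralLinearGroup (Fin l) ℤ) : ℤ) : ℂ) *
            ξ ^ (E (i : Fin l → ℚ) w k)) *
          (starRingEnd ℂ) (∑ w : W,
            ((glDet (w : Matrix.GeneralLinearGroup (Fin l) ℤ) : ℤ) : ℂ) *
              ξ ^ (E (μ : Fin l → ℚ) w k))) := by
      intro k
      rw [Finset.sum_apply, Finset.sum_mul]
      refine Finset.sum_congr rfl fun i _ => ?_
      rw [Pi.smul_apply, smul_eq_mul, mul_assoc]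
    rw [Finset.sum_congr rfl fun k _ => h1 k, Finset.sum_comm] at h0
    have h2 : ∀ i : {x // x ∈ Λ},
        ∑ k : Fin l → Fin r, g i *
          ((∑ w : W, ((glDet (w : Matrix.GeneralLinearGroup (Fin l) ℤ) : ℤ) : ℂ) *
            ξ ^ (E (i : Fin l → ℚ) w k)) *
          (starRingEnd ℂ) (∑ w : W,
            ((glDet (w : Matrix.GeneralLinearGroup (Fin l) ℤ) : ℤ) : ℂ) *
              ξ ^ (E (μ : Fin l → ℚ) w k))) =
        if i = μ then g i * ((Fintype.card W : ℂ) * (r : ℂ) ^ l) else 0 := by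
      intro i
      rw [← Finset.mul_sum, main (i : Fin l → ℚ) i.2 (μ : Fin l → ℚ) μ.2]
      by_cases h : i = μ
      · rw [if_pos (by rw [h]), if_pos h]
      · rw [if_neg (fun hv => h (Subtype.ext hv)), if_neg h, mul_zero]
    rw [Finset.sum_congr rfl fun i _ => h2 i, Finset.sum_ite_eq' Finset.univ μ] at h0
    rw [if_pos (Finset.mem_univ μ)] at h0
    have hcard : (Fintype.card W : ℂ) ≠ 0 := by
      exact_mod_cast Fintype.card_ne_zero
    have hrl : ((r : ℂ)) ^ l ≠ 0 := pow_ne_zero _ (by exact_mod_cast hr.ne')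
    have := mul_ne_zero hcard hrl
    exact (mul_eq_zero.mp h0).resolve_right this
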